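/- Let ρ be a normalized proximate order function with limit ρ₀ > 0 and φ the inverse of r ↦ r^{ρ(r)}. Then for all 0 < σ' < σ there exists t₀ > 0 such that φ(t)/φ(t') ≤ e^{σ·t/t'} / (e·σ'·ρ₀)^{1/ρ₀} for all t, t' ≥ t₀. -/

import Mathlib

private lemma aux_hasDeriv (ρ : ℝ → ℝ) (hdiff : Differentiable ℝ ρ) (c r : ℝ) (hr : 0 < r) :
    HasDerivAt (fun x => ρ x * Real.log x - c * Real.log x)
      ((ρ r + deriv ρ r * r * Real.log r - c) / r) r := by
  have h1 : HasDerivAt (fun x => ρ x * Real.log x)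
      (deriv ρ r * Real.log r + ρ r * r⁻¹) r :=
    ((hdiff r).hasDerivAt).mul (Real.hasDerivAt_log (ne_of_gt hr))
  have h2 : HasDerivAt (fun x => c * Real.log x) (c * r⁻¹) r :=
    (Real.hasDerivAt_log (ne_of_gt hr)).const_mul c
  refine (h1.sub h2).congr_deriv ?_
  have hrr : r * r⁻¹ = 1 := mul_inv_cancel₀ (ne_of_gt hr)
  rw [div_eq_mul_inv]
  linear_combination (-(deriv ρ r * Real.log r)) * hrr

private lemma aux_key (σ ρi c u v : ℝ) (hσ : 0 < σ) (hρ : 0 < ρi) (hu : 0 < u)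
    (hc : c ≤ (1 + Real.log (σ * ρi)) / ρi) (hv : v ≤ Real.log u / ρi) :
    v ≤ σ * u - c := by
  have h1 : Real.log (σ * ρi * u) ≤ σ * ρi * u - 1 :=
    Real.log_le_sub_one_of_pos (by positivity)
  rw [Real.log_mul (by positivity) (ne_of_gt hu)] at h1
  have h2 : Real.log u / ρi ≤ σ * u - (1 + Real.log (σ * ρi)) / ρi := by
    rw [div_le_iff₀ hρ, sub_mul, div_mul_cancel₀ _ (ne_of_gt hρ)]
    nlinarith [h1]
  linarith

/-- Lemma 2.11 iv): for 0 < σ' < σ there is t₀ > 0 with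
φ(t)/φ(t') ≤ e^{σ t/t'}/(eσ'ρ₀)^{1/ρ₀} for all t, t' ≥ t₀. -/
theorem stmt_7 (ρ : ℝ → ℝ) (ρ₀ : ℝ) (hρ₀ : 0 < ρ₀)
    (hdiff : Differentiable ℝ ρ)
    (hpos : ∀ r, 0 ≤ r → 0 ≤ ρ r)
    (hlim : Filter.Tendsto ρ Filter.atTop (nhds ρ₀))
    (hder : Filter.Tendsto (fun r => deriv ρ r * r * Real.log r) Filter.atTop (nhds 0))
    (hmono : StrictMonoOn (fun r => r ^ ρ r) (Set.Ioi (0:ℝ)))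
    (hzero : Filter.Tendsto (fun r => r ^ ρ r) (nhdsWithin 0 (Set.Ioi 0)) (nhds 0))
    (φ : ℝ → ℝ) (hφpos : ∀ t, 0 < t → 0 < φ t)
    (hφ : ∀ r, 0 < r → φ (r ^ ρ r) = r)
    (hφ' : ∀ t, 0 < t → (φ t) ^ ρ (φ t) = t) :
    ∀ σ' σ : ℝ, 0 < σ' → σ' < σ → ∃ t₀ > (0:ℝ), ∀ t t' : ℝ, t₀ ≤ t → t₀ ≤ t' →
      φ t / φ t' ≤ Real.exp (σ * t / t') / (Real.exp 1 * σ' * ρ₀) ^ (1 / ρ₀) := by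
  intro σ' σ hσ' hσ'σ
  have hσ : 0 < σ := hσ'.trans hσ'σ
  set c : ℝ := (1 + Real.log (σ' * ρ₀)) / ρ₀ with hc_def
  -- choose δ
  have hFcont : ContinuousAt (fun x : ℝ => (1 + Real.log (σ * x)) / x) ρ₀ := by
    have h1 : ContinuousAt (fun x : ℝ => σ * x) ρ₀ := by fun_prop
    have h2 : ContinuousAt Real.log (σ * ρ₀) := Real.continuousAt_log (by positivity)
    exact (continuousAt_const.add (h2.comp h1)).div continuousAt_id (ne_of_gt hρ₀)
  have hgt : c < (1 + Real.log (σ * ρ₀)) / ρ₀ := by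
    have hlt := Real.log_lt_log (by positivity : (0:ℝ) < σ' * ρ₀)
      (by nlinarith : σ' * ρ₀ < σ * ρ₀)
    exact (div_lt_div_iff_of_pos_right hρ₀).mpr (by linarith)
  have hev : ∀ᶠ x in nhds ρ₀, c < (1 + Real.log (σ * x)) / x :=
    hFcont.eventually (eventually_gt_nhds hgt)
  rw [Metric.eventually_nhds_iff] at hev
  obtain ⟨ε, hε, hball⟩ := hev
  set δ : ℝ := min (ε / 2) (ρ₀ / 2) with hδ_def
  have hδpos : 0 < δ := lt_min (by linarith) (by linarith)
  have hδρ₀ : δ < ρ₀ := lt_of_le_of_lt (min_le_right _ _) (by linarith)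
  have hδε : δ < ε := lt_of_le_of_lt (min_le_left _ _) (by linarith)
  set ρ₁ : ℝ := ρ₀ - δ with hρ₁_def
  set ρ₂ : ℝ := ρ₀ + δ with hρ₂_def
  have hρ₁pos : 0 < ρ₁ := by simp only [hρ₁_def]; linarith
  have hρ₂pos : 0 < ρ₂ := by simp only [hρ₂_def]; linarith
  have hc₁ : c ≤ (1 + Real.log (σ * ρ₁)) / ρ₁ := by
    refine le_of_lt (hball ?_)
    rw [Real.dist_eq]
    simp only [hρ₁_def]
    rw [show ρ₀ - δ - ρ₀ = -δ by ring, abs_neg, abs_of_pos hδpos]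
    exact hδε
  have hc₂ : c ≤ (1 + Real.log (σ * ρ₂)) / ρ₂ := by
    refine le_of_lt (hball ?_)
    rw [Real.dist_eq]
    simp only [hρ₂_def]
    rw [show ρ₀ + δ - ρ₀ = δ by ring, abs_of_pos hδpos]
    exact hδε
  -- eventual derivative control
  have hsum : Filter.Tendsto (fun r => ρ r + deriv ρ r * r * Real.log r)
      Filter.atTop (nhds ρ₀) := by
    simpa using hlim.add hder
  have hevd : ∀ᶠ r in Filter.atTop,
      ρ r + deriv ρ r * r * Real.log r ∈ Set.Icc ρ₁ ρ₂ :=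
    hsum (Icc_mem_nhds (by simp only [hρ₁_def]; linarith) (by simp only [hρ₂_def]; linarith))
  obtain ⟨R₀, hR₀⟩ := Filter.eventually_atTop.mp hevd
  set R : ℝ := max R₀ 1 with hR_def
  have hRpos : (0:ℝ) < R := lt_of_lt_of_le one_pos (le_max_right _ _)
  have hRbd : ∀ r, R ≤ r → ρ₁ ≤ ρ r + deriv ρ r * r * Real.log r ∧
      ρ r + deriv ρ r * r * Real.log r ≤ ρ₂ := fun r hr =>
    hR₀ r (le_trans (le_max_left _ _) hr)
  -- monotone / antitone auxiliary functions
  have hmonoI : MonotoneOn (fun r => ρ r * Real.log r - ρ₁ * Real.log r) (Set.Ici R) := by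
    apply monotoneOn_of_deriv_nonneg (convex_Ici R)
    · intro r hr
      have hr0 : 0 < r := lt_of_lt_of_le hRpos hr
      exact (aux_hasDeriv ρ hdiff ρ₁ r hr0).continuousAt.continuousWithinAt
    · intro r hr
      rw [interior_Ici] at hr
      have hr0 : 0 < r := lt_of_lt_of_le hRpos hr.le
      exact (aux_hasDeriv ρ hdiff ρ₁ r hr0).differentiableAt.differentiableWithinAt
    · intro r hr
      rw [interior_Ici] at hr
      have hr0 : 0 < r := lt_of_lt_of_le hRpos hr.le
      rw [(aux_hasDeriv ρ hdiff ρ₁ r hr0).deriv]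
      have := (hRbd r hr.le).1
      exact div_nonneg (by linarith) hr0.le
  have hantiI : AntitoneOn (fun r => ρ r * Real.log r - ρ₂ * Real.log r) (Set.Ici R) := by
    apply antitoneOn_of_deriv_nonpos (convex_Ici R)
    · intro r hr
      have hr0 : 0 < r := lt_of_lt_of_le hRpos hr
      exact (aux_hasDeriv ρ hdiff ρ₂ r hr0).continuousAt.continuousWithinAt
    · intro r hr
      rw [interior_Ici] at hr
      have hr0 : 0 < r := lt_of_lt_of_le hRpos hr.le
      exact (aux_hasDeriv ρ hdiff ρ₂ r hr0).differentiableAt.differentiableWithinAt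
    · intro r hr
      rw [interior_Ici] at hr
      have hr0 : 0 < r := lt_of_lt_of_le hRpos hr.le
      rw [(aux_hasDeriv ρ hdiff ρ₂ r hr0).deriv]
      have := (hRbd r hr.le).2
      exact div_nonpos_of_nonpos_of_nonneg (by linarith) hr0.le
  refine ⟨R ^ ρ R, Real.rpow_pos_of_pos hRpos _, ?_⟩
  set t₀ : ℝ := R ^ ρ R with ht₀_def
  have ht₀pos : 0 < t₀ := Real.rpow_pos_of_pos hRpos _
  have hφR : ∀ t, t₀ ≤ t → R ≤ φ t := by
    intro t ht
    by_contra h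
    push_neg at h
    have htpos : 0 < t := lt_of_lt_of_le ht₀pos ht
    have h2 := hmono (Set.mem_Ioi.mpr (hφpos t htpos)) (Set.mem_Ioi.mpr hRpos) h
    simp only at h2
    rw [hφ' t htpos] at h2
    rw [← ht₀_def] at h2
    linarith
  have hlogid : ∀ t, t₀ ≤ t → ρ (φ t) * Real.log (φ t) = Real.log t := by
    intro t ht
    have htpos : 0 < t := lt_of_lt_of_le ht₀pos ht
    conv_rhs => rw [← hφ' t htpos]
    rw [Real.log_rpow (hφpos t htpos)]
  intro t t' ht ht'
  have htpos : 0 < t := lt_of_lt_of_le ht₀pos ht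
  have ht'pos : 0 < t' := lt_of_lt_of_le ht₀pos ht'
  set b : ℝ := φ t with hb_def
  set a : ℝ := φ t' with ha_def
  have hbR : R ≤ b := hφR t ht
  have haR : R ≤ a := hφR t' ht'
  have hapos : 0 < a := lt_of_lt_of_le hRpos haR
  have hbpos : 0 < b := lt_of_lt_of_le hRpos hbR
  have hkey : ∃ ρi : ℝ, 0 < ρi ∧ c ≤ (1 + Real.log (σ * ρi)) / ρi ∧
      ρi * (Real.log b - Real.log a) ≤ Real.log t - Real.log t' := by
    rcases le_total a b with hab | hab
    · refine ⟨ρ₁, hρ₁pos, hc₁, ?_⟩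
      have h3 := hmonoI (Set.mem_Ici.mpr haR) (Set.mem_Ici.mpr hbR) hab
      simp only at h3
      rw [hlogid t ht, hlogid t' ht'] at h3
      nlinarith [h3]
    · refine ⟨ρ₂, hρ₂pos, hc₂, ?_⟩
      have h3 := hantiI (Set.mem_Ici.mpr hbR) (Set.mem_Ici.mpr haR) hab
      simp only at h3
      rw [hlogid t ht, hlogid t' ht'] at h3
      nlinarith [h3]
  obtain ⟨ρi, hρi, hci, hineq⟩ := hkey
  have hlogdiv : Real.log b - Real.log a ≤ Real.log (t / t') / ρi := by
    rw [Real.log_div (ne_of_gt htpos) (ne_of_gt ht'pos), le_div_iff₀ hρi]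
    nlinarith [hineq]
  have hfin := aux_key σ ρi c (t / t') (Real.log b - Real.log a) hσ hρi
    (by positivity) hci hlogdiv
  have hden : (Real.exp 1 * σ' * ρ₀) ^ ((1:ℝ) / ρ₀) = Real.exp c := by
    rw [Real.rpow_def_of_pos (by positivity)]
    congr 1
    rw [Real.log_mul (by positivity) (ne_of_gt hρ₀),
      Real.log_mul (ne_of_gt (Real.exp_pos 1)) (ne_of_gt hσ'), Real.log_exp,
      hc_def, Real.log_mul (ne_of_gt hσ') (ne_of_gt hρ₀)]
    field_simp
    ring
  have hba : b / a = Real.exp (Real.log b - Real.log a) := by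
    rw [Real.exp_sub, Real.exp_log hbpos, Real.exp_log hapos]
  rw [hden, hba, ← Real.exp_sub]
  apply Real.exp_le_exp.mpr
  rw [mul_div_assoc]
  linarith [hfin]
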